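/- Let a, b be real numbers with a > 6 and |b| < a. Define q = -b²/(8a), p = a/4 + q, t = (-72a - 144b - 6b² - a·b²)/(8(a - 6)(a + 12)), s = a/4 + t, and the 6×6 real matrices B and S with entries: B has diagonal entries p, entries q in positions (1,2),(2,1),(3,4),(4,3),(5,6),(6,5), and entries ±3/4 elsewhere following the sign pattern of the matrix [[p,q,3/4,-3/4,3/4,-3/4],[q,p,-3/4,3/4,-3/4,3/4],[3/4,-3/4,p,q,3/4,-3/4],[-3/4,3/4,q,p,-3/4,3/4],[3/4,-3/4,3/4,-3/4,p,q],[-3/4,3/4,-3/4,3/4,q,p]]; S is the same matrix with p replaced by s and q replaced by t. Then a real number λ admits a nonzero vector v ∈ ℝ⁶ with S·v = λ·B·v if and only if λ = 1 or λ = a(a² - ab + 6a - 6b - 144)/((a + 12)(a - 6)(a - b)); moreover 1 - a(a² - ab + 6a - 6b - 144)/((a + 12)(a - 6)(a - b)) = 72(a + b)/((a + 12)(a - 6)(a - b)). -/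

import Mathlib

open Matrix

private theorem cons5 {α : Type*} (a b c d e f : α) : (![a,b,c,d,e,f] : Fin 6 → α) 5 = f := rfl

set_option maxHeartbeats 1000000

theorem rtn_gen_eigenvalues (a b p q s t : ℝ)
    (ha : 6 < a) (hb : |b| < a)
    (hq : q = -(b^2) / (8*a)) (hp : p = a/4 + q)
    (ht : t = (-72*a - 144*b - 6*b^2 - a*b^2) / (8 * (a - 6) * (a + 12)))
    (hs : s = a/4 + t) :
    (∀ lam : ℝ,
      (∃ v : Fin 6 → ℝ, v ≠ 0 ∧
        (!![s, t, 3/4, -3/4, 3/4, -3/4;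
            t, s, -3/4, 3/4, -3/4, 3/4;
            3/4, -3/4, s, t, 3/4, -3/4;
            -3/4, 3/4, t, s, -3/4, 3/4;
            3/4, -3/4, 3/4, -3/4, s, t;
            -3/4, 3/4, -3/4, 3/4, t, s] : Matrix (Fin 6) (Fin 6) ℝ).mulVec v
        = lam • (!![p, q, 3/4, -3/4, 3/4, -3/4;
                    q, p, -3/4, 3/4, -3/4, 3/4;
                    3/4, -3/4, p, q, 3/4, -3/4;
                    -3/4, 3/4, q, p, -3/4, 3/4;
                    3/4, -3/4, 3/4, -3/4, p, q;
                    -3/4, 3/4, -3/4, 3/4, q, p] : Matrix (Fin 6) (Fin 6) ℝ).mulVec v)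
      ↔ (lam = 1 ∨
          lam = a * (a^2 - a*b + 6*a - 6*b - 144) / ((a + 12) * (a - 6) * (a - b)))) ∧
    1 - a * (a^2 - a*b + 6*a - 6*b - 144) / ((a + 12) * (a - 6) * (a - b))
      = 72 * (a + b) / ((a + 12) * (a - 6) * (a - b)) := by
  obtain ⟨hb1, hb2⟩ := abs_lt.mp hb
  have ha0 : a ≠ 0 := by linarith
  have h6 : a - 6 ≠ 0 := by linarith
  have h12 : a + 12 ≠ 0 := by linarith
  have hamb : a - b ≠ 0 := by linarith
  set L := a * (a^2 - a*b + 6*a - 6*b - 144) / ((a + 12) * (a - 6) * (a - b)) with hL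
  have hpq0 : p + q ≠ 0 := by
    have h1 : p + q = (a^2 - b^2)/(4*a) := by rw [hp, hq]; field_simp; ring
    have h2 : (0:ℝ) < a^2 - b^2 := by nlinarith
    rw [h1]
    positivity
  have hkey : s + t = L * (p + q) := by
    rw [hL, hp, hq, hs, ht]
    field_simp
    ring
  have hst : s - t = p - q := by rw [hp, hs]; ring
  have hpqa : p - q = a/4 := by rw [hp]; ring
  constructor
  · intro lam
    constructor
    · rintro ⟨v, hv, h⟩
      have h0 := congrFun h 0
      have h1 := congrFun h 1
      have h2 := congrFun h 2
      have h3 := congrFun h 3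
      have h4 := congrFun h 4
      have h5 := congrFun h 5
      simp [Matrix.mulVec, dotProduct, Fin.sum_univ_six, cons5, show (5:Fin 6)=Fin.succ 4 from rfl, Matrix.cons_val_succ, Matrix.cons_val_four, Matrix.cons_val_three, Matrix.cons_val_two] at h0 h1 h2 h3 h4 h5
      by_cases hl1 : lam = 1
      · exact Or.inl hl1
      right
      have hlam : 1 - lam ≠ 0 := fun hc => hl1 (by linarith [hc])
      -- difference equations
      have G0 : (1 - lam) * ((p - q) * (v 0 - v 1) + (3/2) * ((v 2 - v 3) + (v 4 - v 5))) = 0 := by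
        linear_combination h0 - h1 - (v 0 - v 1) * hst
      have G1 : (1 - lam) * ((p - q) * (v 2 - v 3) + (3/2) * ((v 0 - v 1) + (v 4 - v 5))) = 0 := by
        linear_combination h2 - h3 - (v 2 - v 3) * hst
      have G2 : (1 - lam) * ((p - q) * (v 4 - v 5) + (3/2) * ((v 0 - v 1) + (v 2 - v 3))) = 0 := by
        linear_combination h4 - h5 - (v 4 - v 5) * hst
      have E0 := (mul_eq_zero.mp G0).resolve_left hlam
      have E1 := (mul_eq_zero.mp G1).resolve_left hlam
      have E2 := (mul_eq_zero.mp G2).resolve_left hlam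
      rw [hpqa] at E0 E1 E2
      have hsig : (a/4 + 3) * ((v 0 - v 1) + (v 2 - v 3) + (v 4 - v 5)) = 0 := by
        linear_combination E0 + E1 + E2
      have hsig0 : (v 0 - v 1) + (v 2 - v 3) + (v 4 - v 5) = 0 :=
        (mul_eq_zero.mp hsig).resolve_left (by linarith)
      have ha32 : a/4 - 3/2 ≠ 0 := by intro hc; linarith
      have d0 : v 0 - v 1 = 0 := by
        have : (a/4 - 3/2) * (v 0 - v 1) = 0 := by linear_combination E0 - (3/2) * hsig0
        exact (mul_eq_zero.mp this).resolve_left ha32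
      have d1 : v 2 - v 3 = 0 := by
        have : (a/4 - 3/2) * (v 2 - v 3) = 0 := by linear_combination E1 - (3/2) * hsig0
        exact (mul_eq_zero.mp this).resolve_left ha32
      have d2 : v 4 - v 5 = 0 := by
        have : (a/4 - 3/2) * (v 4 - v 5) = 0 := by linear_combination E2 - (3/2) * hsig0
        exact (mul_eq_zero.mp this).resolve_left ha32
      -- sum equations
      have hu0 : (s + t) * (v 0 + v 1) = lam * ((p + q) * (v 0 + v 1)) := by
        linear_combination h0 + h1
      have hu1 : (s + t) * (v 2 + v 3) = lam * ((p + q) * (v 2 + v 3)) := by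
        linear_combination h2 + h3
      have hu2 : (s + t) * (v 4 + v 5) = lam * ((p + q) * (v 4 + v 5)) := by
        linear_combination h4 + h5
      -- some pair sum is nonzero
      have hex : v 0 + v 1 ≠ 0 ∨ v 2 + v 3 ≠ 0 ∨ v 4 + v 5 ≠ 0 := by
        by_contra hc
        push_neg at hc
        obtain ⟨c0, c1, c2⟩ := hc
        apply hv
        funext i
        fin_cases i <;> simp <;> linarith
      have final : ∀ u : ℝ, u ≠ 0 → (s + t) * u = lam * ((p + q) * u) → lam = L := by
        intro u hu heq
        have : (lam - L) * ((p + q) * u) = 0 := by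
          linear_combination u * hkey - heq
        rcases mul_eq_zero.mp this with h | h
        · linarith [sub_eq_zero.mp h]
        · exact absurd (mul_eq_zero.mp h) (by push_neg; exact ⟨hpq0, hu⟩)
      rcases hex with hu | hu | hu
      · exact final _ hu hu0
      · exact final _ hu hu1
      · exact final _ hu hu2
    · rintro (rfl | rfl)
      · refine ⟨![1, -1, 1, -1, 1, -1], ?_, ?_⟩
        · intro hc
          have := congrFun hc 0
          simp at this
        · funext i
          fin_cases i <;>
            simp [Matrix.mulVec, dotProduct, Fin.sum_univ_six, cons5, show (5:Fin 6)=Fin.succ 4 from rfl, Matrix.cons_val_succ, Matrix.cons_val_four, Matrix.cons_val_three, Matrix.cons_val_two] <;> linarith [hst]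
      · refine ⟨![1, 1, 1, 1, 1, 1], ?_, ?_⟩
        · intro hc
          have := congrFun hc 0
          simp at this
        · funext i
          fin_cases i <;>
            simp [Matrix.mulVec, dotProduct, Fin.sum_univ_six, cons5, show (5:Fin 6)=Fin.succ 4 from rfl, Matrix.cons_val_succ, Matrix.cons_val_four, Matrix.cons_val_three, Matrix.cons_val_two] <;>
            linear_combination hkey
  · rw [hL]
    field_simp
    ring
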